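/- Let H be a finite-dimensional complex Hilbert space. Then the set P(H) of positive semidefinite operators on H is a maximal proper quadratic module in the *-algebra B(H) of linear operators on H with the adjoint involution. -/

import Mathlib

def IsQuadraticModule {R : Type*} [Ring R] [StarRing R] (M : Set R) : Prop :=
  (∀ a ∈ M, star a = a) ∧ (1 : R) ∈ M ∧ (∀ a ∈ M, ∀ b ∈ M, a + b ∈ M) ∧
    ∀ r : R, ∀ a ∈ M, r * a * star r ∈ M

def IsProperQuadraticModule {R : Type*} [Ring R] [StarRing R] (M : Set R) : Prop :=
  IsQuadraticModule M ∧ (-1 : R) ∉ M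

def IsMaximalProperQuadraticModule {R : Type*} [Ring R] [StarRing R] (M : Set R) : Prop :=
  IsProperQuadraticModule M ∧
    ∀ M' : Set R, IsProperQuadraticModule M' → M ⊆ M' → M' = M

open ContinuousLinearMap
open scoped InnerProductSpace

section Aux

variable {H : Type*} [NormedAddCommGroup H] [InnerProductSpace ℂ H] [FiniteDimensional ℂ H]

/-- rank one operator `x ↦ ⟪v, x⟫ • u`. -/
noncomputable def rkOne (u v : H) : H →L[ℂ] H := (innerSL ℂ v).smulRight u

@[simp] lemma rkOne_apply (u v x : H) : rkOne u v x = ⟪v, x⟫_ℂ • u := rfl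

lemma rkOne_adjoint (u v : H) : adjoint (rkOne u v) = rkOne v u := by
  symm
  rw [eq_adjoint_iff]
  intro x y
  simp [inner_smul_left, inner_smul_right, ← inner_conj_symm v x]
  ring

lemma conj_rkOne (T : H →L[ℂ] H) (u v : H) :
    rkOne u v * T * star (rkOne u v) = ⟪v, T v⟫_ℂ • rkOne u u := by
  ext y
  simp [star_eq_adjoint, rkOne_adjoint, mul_apply, inner_smul_right, smul_smul, mul_comm]

lemma neg_one_mem_aux [Nontrivial H]
    (M' : Set (H →L[ℂ] H))
    (hsa : ∀ a ∈ M', star a = a)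
    (hadd : ∀ a ∈ M', ∀ b ∈ M', a + b ∈ M')
    (hconj : ∀ r : H →L[ℂ] H, ∀ a ∈ M', r * a * star r ∈ M')
    (T : H →L[ℂ] H) (hT : T ∈ M') (hTpos : ¬ T.IsPositive) :
    (-1 : H →L[ℂ] H) ∈ M' := by
  have hTsa : IsSelfAdjoint T := hsa T hT
  have hx : ∃ x, T.reApplyInnerSelf x < 0 := by
    by_contra h
    push_neg at h
    exact hTpos ⟨hTsa.isSymmetric, fun x => h x⟩
  obtain ⟨x, hx⟩ := hx
  set c : ℝ := T.reApplyInnerSelf x with hc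
  have hreal : ⟪x, T x⟫_ℂ = (c : ℂ) := by
    have h1 : ⟪T x, x⟫_ℂ = ⟪x, T x⟫_ℂ := hTsa.isSymmetric x x
    have h2 : (starRingEnd ℂ) ⟪x, T x⟫_ℂ = ⟪x, T x⟫_ℂ := by
      rw [inner_conj_symm, h1]
    have h3 : ⟪x, T x⟫_ℂ = ((⟪x, T x⟫_ℂ).re : ℂ) := (Complex.conj_eq_iff_re.mp h2).symm
    rw [h3]
    norm_cast
    rw [hc, T.reApplyInnerSelf_apply, h1]
    rfl
  have key : ∀ u : H, -rkOne u u ∈ M' := by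
    intro u
    have hmem := hconj (((Real.sqrt (-c))⁻¹ : ℂ) • rkOne u x) T hT
    have heq : (((Real.sqrt (-c))⁻¹ : ℂ) • rkOne u x) * T *
        star (((Real.sqrt (-c))⁻¹ : ℂ) • rkOne u x) = -rkOne u u := by
      rw [star_smul, mul_smul_comm, smul_mul_assoc, smul_mul_assoc, conj_rkOne, smul_smul,
        smul_smul, hreal]
      have hc' : (0:ℝ) < -c := by linarith
      have hne : c ≠ 0 := by linarith
      have hscal : star ((Real.sqrt (-c) : ℝ) : ℂ)⁻¹ * ((Real.sqrt (-c) : ℝ) : ℂ)⁻¹ *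
          (c : ℂ) = -1 := by
        simp only [Complex.star_def, ← Complex.ofReal_inv, Complex.conj_ofReal]
        norm_cast
        rw [← mul_inv, Real.mul_self_sqrt hc'.le]
        field_simp
        simp [Int.cast_negSucc]
      rw [hscal, neg_one_smul]
    rwa [heq] at hmem
  set b := stdOrthonormalBasis ℂ H with hb
  have hn : 0 < Module.finrank ℂ H := Module.finrank_pos
  have hsum : (-1 : H →L[ℂ] H) = ∑ i, -rkOne (b i) (b i) := by
    ext y
    simp only [ContinuousLinearMap.neg_apply, ContinuousLinearMap.one_apply,
      ContinuousLinearMap.sum_apply, rkOne_apply, ← Finset.sum_neg_distrib]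
    rw [← neg_inj.mpr (b.sum_repr' y)]
    simp
  rw [hsum]
  refine Finset.sum_induction_nonempty _ (· ∈ M') (fun a b ha hb => hadd a ha b hb) ?_
    (fun i _ => key (b i))
  exact Finset.univ_nonempty_iff.mpr (Fin.pos_iff_nonempty.mp hn)

end Aux

/-- On a (nonzero) finite-dimensional complex Hilbert space, the positive
semidefinite operators form a maximal proper quadratic module in `B(H)`. -/
theorem positive_operators_maximal {H : Type*} [NormedAddCommGroup H]
    [InnerProductSpace ℂ H] [FiniteDimensional ℂ H] [Nontrivial H] :
    IsMaximalProperQuadraticModule {T : H →L[ℂ] H | T.IsPositive} := by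
  constructor
  · constructor
    · refine ⟨fun a ha => ?_, isPositive_one, fun a ha b hb => ha.add hb,
        fun r a ha => ?_⟩
      · rw [star_eq_adjoint]
        exact ha.isSelfAdjoint
      · have := ha.conj_adjoint r
        rwa [star_eq_adjoint]
    · intro h
      obtain ⟨y, hy⟩ := exists_ne (0 : H)
      have := h.2 y
      rw [reApplyInnerSelf_apply] at this
      simp only [ContinuousLinearMap.neg_apply, ContinuousLinearMap.one_apply,
        inner_neg_left, map_neg, inner_self_eq_norm_sq] at this
      have h2 : (0:ℝ) < ‖y‖ := norm_pos_iff.mpr hy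
      nlinarith
  · intro M' hM' hsub
    obtain ⟨⟨hsa, hone, hadd, hconj⟩, hproper⟩ := hM'
    refine Set.Subset.antisymm (fun T hT => ?_) hsub
    by_contra hTpos
    exact hproper (neg_one_mem_aux M' hsa hadd hconj T hT hTpos)
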